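/- For all x ∈ ℝ, the inequalities (2e^{√2}/(e−1))·(e^{√(1+x²)} − e) ≥ (x²/(1+x²))·e^{√(1+x²)} ≥ (1/2)·(e^{√(1+x²)} − e) hold. -/
import Mathlib


open Real

lemma aux_right (s : ℝ) (hs : 1 ≤ s) :
    ((s ^ 2 - 1) / s ^ 2) * exp s ≥ (1 / 2) * (exp s - exp 1) := by
  have hs2 : (0:ℝ) < s ^ 2 := by nlinarith
  have hE : 0 < exp s := Real.exp_pos s
  have he1E : exp 1 ≤ exp s := Real.exp_le_exp.mpr hs
  have he1 : 0 < exp 1 := Real.exp_pos 1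
  rw [ge_iff_le, div_mul_eq_mul_div (s ^ 2 - 1) (s ^ 2) (exp s), le_div_iff₀ hs2]
  rcases le_or_gt (s ^ 2) 2 with h2 | h2
  · -- small s : use (2 - s) * exp s ≤ exp 1
    have key : (2 - s) * exp s ≤ exp 1 := by
      have h := Real.add_one_le_exp (1 - s)
      have hsub : Real.exp (1 - s) = exp 1 / exp s := Real.exp_sub 1 s
      rw [hsub] at h
      have := (le_div_iff₀ hE).mp (by linarith : 2 - s ≤ exp 1 / exp s)
      linarith
    have hkey2 : s ^ 2 * ((2 - s) * exp s) ≤ s ^ 2 * exp 1 :=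
      mul_le_mul_of_nonneg_left key (le_of_lt hs2)
    have hcube : 0 ≤ (s - 1) * ((2 + 2 * s - s ^ 2) * exp s) := by
      apply mul_nonneg (by linarith)
      apply mul_nonneg (by nlinarith) hE.le
    nlinarith [hkey2, hcube]
  · -- large s : (s^2 - 1) ≥ s^2/2
    have h1 : 0 ≤ (s ^ 2 - 2) * exp s := mul_nonneg (by linarith) hE.le
    nlinarith [mul_pos hs2 he1]

set_option maxHeartbeats 1000000 in
lemma aux_left (s : ℝ) (hs : 1 ≤ s) :
    (2 * exp (Real.sqrt 2) / (exp 1 - 1)) * (exp s - exp 1)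
      ≥ ((s ^ 2 - 1) / s ^ 2) * exp s := by
  have hs2 : (0:ℝ) < s ^ 2 := by nlinarith
  have hE : 0 < exp s := Real.exp_pos s
  have he1E : exp 1 ≤ exp s := Real.exp_le_exp.mpr hs
  have he1 : 0 < exp 1 := Real.exp_pos 1
  have heub : exp 1 < 2.72 := lt_trans Real.exp_one_lt_d9 (by norm_num)
  have helb : (2.71:ℝ) < exp 1 := lt_trans (by norm_num) Real.exp_one_gt_d9
  have hden : (0:ℝ) < exp 1 - 1 := by linarith
  -- exp (sqrt 2) ≥ 1.4 * exp 1
  have h14 : (1.4:ℝ) ≤ Real.sqrt 2 := by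
    rw [show (1.4:ℝ) = Real.sqrt 1.96 by
      rw [show (1.96:ℝ) = 1.4 ^ 2 by norm_num]
      exact (Real.sqrt_sq (by norm_num)).symm]
    exact Real.sqrt_le_sqrt (by norm_num)
  have hc : 1.4 * exp 1 ≤ exp (Real.sqrt 2) := by
    have h1 : exp (Real.sqrt 2) ≥ exp 1.4 := Real.exp_le_exp.mpr h14
    have h2 : exp (1.4:ℝ) = exp 1 * exp 0.4 := by
      rw [← Real.exp_add]; norm_num
    have h3 : (1.4:ℝ) ≤ exp 0.4 := by
      have := Real.add_one_le_exp (0.4:ℝ); linarith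
    have h4 : exp 1 * 1.4 ≤ exp 1 * exp 0.4 :=
      mul_le_mul_of_nonneg_left h3 he1.le
    nlinarith
  rcases le_or_gt s (3/2) with hsmall | hbig
  · -- 1 ≤ s ≤ 3/2
    have hfrac : ((s ^ 2 - 1) / s ^ 2) * exp s ≤ (s ^ 2 - 1) * exp s := by
      apply mul_le_mul_of_nonneg_right _ hE.le
      exact div_le_self (by nlinarith) (by nlinarith)
    have hEle : exp s ≤ 1.7 * exp 1 := by
      have h1 : exp s ≤ exp (3/2:ℝ) := Real.exp_le_exp.mpr hsmall
      have h2 : exp (3/2:ℝ) = exp 1 * exp (1/2:ℝ) := by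
        rw [← Real.exp_add]; norm_num
      have h3 : exp (1/2:ℝ) * exp (1/2:ℝ) = exp 1 := by
        rw [← Real.exp_add]; norm_num
      have h4 : exp (1/2:ℝ) ≤ 1.7 := by
        nlinarith [Real.exp_pos (1/2:ℝ), sq_nonneg (exp (1/2:ℝ) - 1.7), heub]
      nlinarith [Real.exp_pos (1/2:ℝ)]
    have hse : s * exp 1 ≤ exp s := by
      have h := Real.add_one_le_exp (s - 1)
      have hsub : Real.exp (s - 1) = exp s / exp 1 := Real.exp_sub s 1
      rw [hsub] at h
      nlinarith [(le_div_iff₀ he1).mp (by linarith : s ≤ exp s / exp 1)]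
    have main : (s ^ 2 - 1) * exp s * (exp 1 - 1) ≤ 2 * exp (Real.sqrt 2) * (exp s - exp 1) := ?_
    · calc ((s ^ 2 - 1) / s ^ 2) * exp s ≤ (s ^ 2 - 1) * exp s := hfrac
        _ ≤ 2 * exp (Real.sqrt 2) * (exp s - exp 1) / (exp 1 - 1) := by
            rw [le_div_iff₀ hden]; linarith [main]
        _ = (2 * exp (Real.sqrt 2) / (exp 1 - 1)) * (exp s - exp 1) := by ring
    have h2 : (s + 1) * exp s ≤ 4.25 * exp 1 := by nlinarith
    have h3 : (s ^ 2 - 1) * exp s * (exp 1 - 1)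
        ≤ (s - 1) * (4.25 * exp 1) * (exp 1 - 1) := by
      have : (s - 1) * ((s + 1) * exp s) ≤ (s - 1) * (4.25 * exp 1) :=
        mul_le_mul_of_nonneg_left h2 (by linarith)
      nlinarith
    have hnn : (0:ℝ) ≤ (s - 1) * exp 1 :=
      mul_nonneg (by linarith) he1.le
    have h4 : (s - 1) * (4.25 * exp 1) * (exp 1 - 1)
        ≤ (s - 1) * (2.8 * exp 1) * exp 1 := by
      have hx : (4.25:ℝ) * (exp 1 - 1) ≤ 2.8 * exp 1 := by linarith
      calc (s - 1) * (4.25 * exp 1) * (exp 1 - 1)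
          = ((s - 1) * exp 1) * (4.25 * (exp 1 - 1)) := by ring
        _ ≤ ((s - 1) * exp 1) * (2.8 * exp 1) := mul_le_mul_of_nonneg_left hx hnn
        _ = (s - 1) * (2.8 * exp 1) * exp 1 := by ring
    have h5 : (s - 1) * (2.8 * exp 1) * exp 1 ≤ 2 * exp (Real.sqrt 2) * ((s - 1) * exp 1) := by
      have hx : (2.8:ℝ) * exp 1 ≤ 2 * exp (Real.sqrt 2) := by linarith
      calc (s - 1) * (2.8 * exp 1) * exp 1
          = ((s - 1) * exp 1) * (2.8 * exp 1) := by ring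
        _ ≤ ((s - 1) * exp 1) * (2 * exp (Real.sqrt 2)) := mul_le_mul_of_nonneg_left hx hnn
        _ = 2 * exp (Real.sqrt 2) * ((s - 1) * exp 1) := by ring
    have h6 : 2 * exp (Real.sqrt 2) * ((s - 1) * exp 1)
        ≤ 2 * exp (Real.sqrt 2) * (exp s - exp 1) := by
      have hd : (s - 1) * exp 1 ≤ exp s - exp 1 := by
        calc (s - 1) * exp 1 = s * exp 1 - exp 1 := by ring
          _ ≤ exp s - exp 1 := by linarith [hse]
      exact mul_le_mul_of_nonneg_left hd (by positivity)
    linarith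
  · -- s ≥ 3/2
    have hfrac : ((s ^ 2 - 1) / s ^ 2) * exp s ≤ exp s := by
      have h := mul_le_mul_of_nonneg_right
        (show (s ^ 2 - 1) / s ^ 2 ≤ 1 by rw [div_le_one hs2]; linarith) hE.le
      rw [one_mul] at h; exact h
    have hElb : 1.5 * exp 1 ≤ exp s := by
      have h1 : exp (3/2:ℝ) ≤ exp s := Real.exp_le_exp.mpr hbig.le
      have h2 : exp (3/2:ℝ) = exp 1 * exp (1/2:ℝ) := by
        rw [← Real.exp_add]; norm_num
      have h3 : (1.5:ℝ) ≤ exp (1/2:ℝ) := by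
        have := Real.add_one_le_exp (1/2:ℝ); linarith
      calc (1.5:ℝ) * exp 1 = exp 1 * 1.5 := by ring
        _ ≤ exp 1 * exp (1/2:ℝ) := mul_le_mul_of_nonneg_left h3 he1.le
        _ = exp (3/2:ℝ) := h2.symm
        _ ≤ exp s := h1
    have hC3 : (3:ℝ) ≤ 2 * exp (Real.sqrt 2) / (exp 1 - 1) := by
      rw [le_div_iff₀ hden]; linarith
    have hstep : 3 * (exp s - exp 1) ≤
        (2 * exp (Real.sqrt 2) / (exp 1 - 1)) * (exp s - exp 1) :=
      mul_le_mul_of_nonneg_right hC3 (by linarith)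
    have : exp s ≤ 3 * (exp s - exp 1) := by linarith
    linarith [hfrac]

theorem scalar_example_bounds (x : ℝ) :
    (2 * exp (Real.sqrt 2) / (exp 1 - 1)) * (exp (Real.sqrt (1 + x ^ 2)) - exp 1)
        ≥ (x ^ 2 / (1 + x ^ 2)) * exp (Real.sqrt (1 + x ^ 2))
      ∧ (x ^ 2 / (1 + x ^ 2)) * exp (Real.sqrt (1 + x ^ 2))
        ≥ (1 / 2) * (exp (Real.sqrt (1 + x ^ 2)) - exp 1) := by
  set s := Real.sqrt (1 + x ^ 2) with hs_def
  have hpos : (0:ℝ) ≤ 1 + x ^ 2 := by positivity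
  have hs2 : s ^ 2 = 1 + x ^ 2 := Real.sq_sqrt hpos
  have hs1 : 1 ≤ s := by
    nlinarith [hs2, Real.sqrt_nonneg (1 + x ^ 2), sq_nonneg x]
  have hx2 : x ^ 2 = s ^ 2 - 1 := by linarith
  have hx21 : 1 + x ^ 2 = s ^ 2 := by linarith
  rw [hx21, hx2]
  exact ⟨aux_left s hs1, aux_right s hs1⟩
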